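/- (Theorem, Case 3: the route is determined up to finitely many choices.) Let A, O ∈ EuclideanSpace ℝ (Fin 2) with A ≠ O, let r ≥ 0, and let t₀ < t₁ < t₂ be real times. Then the set of velocity vectors V ∈ EuclideanSpace ℝ (Fin 2) such that dist (A + (t₁ - t₀) • V) O = r and dist (A + (t₂ - t₀) • V) O = r is finite and has at most 2 elements. (Given the entrance and exit times for a threat circle and one known time-stamped location A on the route, the complete route of the bomber can be calculated up to at most two possibilities.) -/

import Mathlib

/-- Case 3: given one time-stamped point `A ≠ O` on the route and the
entrance and exit times `t₁ < t₂` for the threat circle of center `O` and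
radius `r`, the velocity — hence the complete route — is determined up to at
most two possibilities. -/
theorem case_three_at_most_two_routes (A O : EuclideanSpace ℝ (Fin 2)) (hAO : A ≠ O)
    (r : ℝ) (hr : 0 ≤ r) (t₀ t₁ t₂ : ℝ) (h01 : t₀ < t₁) (h12 : t₁ < t₂) :
    {V : EuclideanSpace ℝ (Fin 2) |
        dist (A + (t₁ - t₀) • V) O = r ∧ dist (A + (t₂ - t₀) • V) O = r}.Finite ∧
    {V : EuclideanSpace ℝ (Fin 2) |
        dist (A + (t₁ - t₀) • V) O = r ∧ dist (A + (t₂ - t₀) • V) O = r}.ncard ≤ 2 := by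
  set s₁ : ℝ := t₁ - t₀ with hs₁def
  set s₂ : ℝ := t₂ - t₀ with hs₂def
  have hs₁ : 0 < s₁ := by simp [hs₁def]; linarith
  have hs₂ : 0 < s₂ := by simp [hs₂def]; linarith
  have hs12 : s₁ < s₂ := by simp [hs₁def, hs₂def]; linarith
  set b0 : ℝ := A 0 - O 0 with hb0
  set b1 : ℝ := A 1 - O 1 with hb1
  have hnB : 0 < b0 ^ 2 + b1 ^ 2 := by
    rcases lt_or_eq_of_le (by positivity : (0:ℝ) ≤ b0 ^ 2 + b1 ^ 2) with h | h
    · exact h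
    · exfalso
      apply hAO
      have h0 : b0 = 0 := by nlinarith [sq_nonneg b0, sq_nonneg b1]
      have h1 : b1 = 0 := by nlinarith [sq_nonneg b0, sq_nonneg b1]
      ext i
      fin_cases i
      · have h0' : A 0 - O 0 = 0 := by rw [← hb0]; exact h0
        exact sub_eq_zero.mp h0'
      · have h1' : A 1 - O 1 = 0 := by rw [← hb1]; exact h1
        exact sub_eq_zero.mp h1'
  set c : ℝ := (b0 ^ 2 + b1 ^ 2 - r ^ 2) / (s₁ * s₂) with hc
  set k : ℝ := -(s₁ + s₂) * c / 2 with hk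
  set d : ℝ := (b0 ^ 2 + b1 ^ 2) * c - k ^ 2 with hd
  set S := {V : EuclideanSpace ℝ (Fin 2) |
      dist (A + s₁ • V) O = r ∧ dist (A + s₂ • V) O = r} with hSdef
  -- coordinate form of the distance equations
  have hdist : ∀ (s : ℝ) (V : EuclideanSpace ℝ (Fin 2)), dist (A + s • V) O = r →
      (b0 + s * V 0) ^ 2 + (b1 + s * V 1) ^ 2 = r ^ 2 := by
    intro s V h
    have h2 : dist (A + s • V) O ^ 2 = r ^ 2 := by rw [h]
    rw [EuclideanSpace.dist_eq, Real.sq_sqrt (by positivity)] at h2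
    simp only [Fin.sum_univ_two, Real.dist_eq, sq_abs, PiLp.add_apply, PiLp.smul_apply,
      smul_eq_mul] at h2
    rw [hb0, hb1]
    linear_combination h2
  -- for each V in S, the key algebraic facts
  have hprops : ∀ V ∈ S, (V 0) ^ 2 + (V 1) ^ 2 = c ∧ b0 * V 0 + b1 * V 1 = k := by
    intro V hV
    obtain ⟨h1, h2⟩ := hV
    have eq1 := hdist s₁ V h1
    have eq2 := hdist s₂ V h2
    have hu0 : (s₂ - s₁) * (s₁ * s₂ * ((V 0) ^ 2 + (V 1) ^ 2)
        - (b0 ^ 2 + b1 ^ 2 - r ^ 2)) = 0 := by linear_combination s₁ * eq2 - s₂ * eq1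
    have hu1 : s₁ * s₂ * ((V 0) ^ 2 + (V 1) ^ 2) = b0 ^ 2 + b1 ^ 2 - r ^ 2 := by
      have := mul_eq_zero.mp hu0
      rcases this with h | h
      · exfalso; linarith
      · linarith
    have hu : (V 0) ^ 2 + (V 1) ^ 2 = c := by
      rw [hc, eq_div_iff (by positivity)]
      linarith [hu1]
    refine ⟨hu, ?_⟩
    have hw0 : (s₁ - s₂) * (2 * (b0 * V 0 + b1 * V 1)
        + (s₁ + s₂) * ((V 0) ^ 2 + (V 1) ^ 2)) = 0 := by linear_combination eq1 - eq2
    have hw1 : 2 * (b0 * V 0 + b1 * V 1) + (s₁ + s₂) * ((V 0) ^ 2 + (V 1) ^ 2) = 0 := by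
      rcases mul_eq_zero.mp hw0 with h | h
      · exfalso; linarith
      · exact h
    rw [hk]
    rw [hu] at hw1
    linear_combination hw1 / 2
  -- the perpendicular coordinate squares to d
  have hsq : ∀ V ∈ S, (b1 * V 0 - b0 * V 1) ^ 2 = d := by
    intro V hV
    obtain ⟨hu, hw⟩ := hprops V hV
    rw [hd]
    linear_combination (b0 ^ 2 + b1 ^ 2) * hu - (b0 * V 0 + b1 * V 1 + k) * hw
  set f : EuclideanSpace ℝ (Fin 2) → ℝ := fun V => b1 * V 0 - b0 * V 1 with hf
  have himg : f '' S ⊆ {Real.sqrt d, -Real.sqrt d} := by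
    rintro x ⟨V, hV, rfl⟩
    have h := hsq V hV
    have hd0 : Real.sqrt d = |f V| := by
      rw [← h]; exact Real.sqrt_sq_eq_abs _
    have : |f V| = Real.sqrt d := hd0.symm
    rcases (abs_eq (Real.sqrt_nonneg d)).mp this with h' | h'
    · exact Or.inl h'
    · exact Or.inr h'
  have hinj : Set.InjOn f S := by
    intro V hV W hW hfVW
    obtain ⟨huV, hwV⟩ := hprops V hV
    obtain ⟨huW, hwW⟩ := hprops W hW
    have h1 : b0 * (V 0 - W 0) + b1 * (V 1 - W 1) = 0 := by linear_combination hwV - hwW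
    have h2 : b1 * (V 0 - W 0) - b0 * (V 1 - W 1) = 0 := by
      simp only [hf] at hfVW
      linear_combination hfVW
    have hx : V 0 = W 0 := by
      have : (b0 ^ 2 + b1 ^ 2) * (V 0 - W 0) = 0 := by linear_combination b0 * h1 + b1 * h2
      rcases mul_eq_zero.mp this with h | h
      · exact absurd h (by positivity)
      · linarith
    have hy : V 1 = W 1 := by
      have : (b0 ^ 2 + b1 ^ 2) * (V 1 - W 1) = 0 := by linear_combination b1 * h1 - b0 * h2
      rcases mul_eq_zero.mp this with h | h
      · exact absurd h (by positivity)
      · linarith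
    ext i
    fin_cases i
    · exact hx
    · exact hy
  have hpairfin : ({Real.sqrt d, -Real.sqrt d} : Set ℝ).Finite :=
    (Set.finite_singleton _).insert _
  have hSfin : S.Finite :=
    Set.Finite.of_finite_image (hpairfin.subset himg) hinj
  refine ⟨hSfin, ?_⟩
  calc S.ncard = (f '' S).ncard := (Set.ncard_image_of_injOn hinj).symm
    _ ≤ ({Real.sqrt d, -Real.sqrt d} : Set ℝ).ncard :=
        Set.ncard_le_ncard himg hpairfin
    _ ≤ 2 := by
        apply le_trans (Set.ncard_insert_le _ _)
        simp
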